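/- Let S be a real symmetric unreduced tridiagonal N×N matrix with negative off-diagonal entries b_2,...,b_N < 0 and eigenvalues λ_1 = 0 < λ_2 < ... < λ_N (N > 1). If v is a unit eigenvector of S associated with the eigenvalue 0, then all entries of v have the same sign (all strictly positive or all strictly negative). -/

import Mathlib

open Matrix Polynomial

def IsTridiagonal {N : ℕ} (M : Matrix (Fin N) (Fin N) ℝ) : Prop :=
  ∀ i j : Fin N, ((i : ℕ) + 1 < j ∨ (j : ℕ) + 1 < i) → M i j = 0

section Aux

variable {N : ℕ} (S : Matrix (Fin N) (Fin N) ℝ)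

/-- Off-diagonal entries are nonpositive. -/
lemma aux_offdiag_nonpos (hS : S.IsSymm) (htri : IsTridiagonal S)
    (hneg : ∀ i j : Fin N, (i : ℕ) + 1 = j → S i j < 0) :
    ∀ i j : Fin N, i ≠ j → S i j ≤ 0 := by
  intro i j hij
  have hijv : (i : ℕ) ≠ (j : ℕ) := fun h => hij (Fin.ext h)
  rcases lt_trichotomy ((i : ℕ) + 1) (j : ℕ) with h | h | h
  · exact le_of_eq (htri i j (Or.inl h))
  · exact le_of_lt (hneg i j h)
  · rcases lt_trichotomy ((j : ℕ) + 1) (i : ℕ) with h' | h' | h'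
    · exact le_of_eq (htri i j (Or.inr h'))
    · have := hneg j i h'
      rw [hS.apply j i]; exact le_of_lt this
    · omega

/-- A nonneg vector in the kernel that vanishes at a neighbor-related index. -/
lemma aux_nbr (hS : S.IsSymm) (htri : IsTridiagonal S)
    (hneg : ∀ i j : Fin N, (i : ℕ) + 1 = j → S i j < 0)
    (u : Fin N → ℝ) (hu0 : S.mulVec u = 0) (hupos : ∀ i, 0 ≤ u i)
    (k : Fin N) (hk : u k = 0) (j : Fin N)
    (hrel : (k : ℕ) + 1 = j ∨ (j : ℕ) + 1 = k) : u j = 0 := by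
  have hoff := aux_offdiag_nonpos S hS htri hneg
  have hsum : ∑ l, S k l * u l = 0 := by
    have := congrFun hu0 k
    simpa [Matrix.mulVec, dotProduct] using this
  have hterm : ∀ l ∈ Finset.univ, S k l * u l ≤ 0 := by
    intro l _
    by_cases hlk : l = k
    · subst hlk; rw [hk]; simp
    · exact mul_nonpos_of_nonpos_of_nonneg (hoff k l (fun h => hlk h.symm)) (hupos l)
  have hz : ∀ l ∈ Finset.univ, S k l * u l = 0 :=
    (Finset.sum_eq_zero_iff_of_nonpos hterm).mp hsum
  have hzj := hz j (Finset.mem_univ j)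
  have hSkj : S k j < 0 := by
    rcases hrel with h | h
    · exact hneg k j h
    · have := hneg j k h
      rw [hS.apply j k]; exact this
  have := mul_eq_zero.mp hzj
  rcases this with h | h
  · exact absurd h (ne_of_lt hSkj)
  · exact h

/-- A nonnegative kernel vector with a zero entry is identically zero. -/
lemma aux_prop (hS : S.IsSymm) (htri : IsTridiagonal S)
    (hneg : ∀ i j : Fin N, (i : ℕ) + 1 = j → S i j < 0)
    (u : Fin N → ℝ) (hu0 : S.mulVec u = 0) (hupos : ∀ i, 0 ≤ u i)
    (k : Fin N) (hk : u k = 0) : ∀ i, u i = 0 := by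
  have nbr := aux_nbr S hS htri hneg u hu0 hupos
  have hkN : (k : ℕ) < N := k.isLt
  have down : ∀ d : ℕ, u ⟨(k : ℕ) - d, by omega⟩ = 0 := by
    intro d
    induction d with
    | zero => simpa using hk
    | succ d ih =>
      by_cases hd : d < (k : ℕ)
      · exact nbr ⟨(k : ℕ) - d, by omega⟩ ih ⟨(k : ℕ) - (d + 1), by omega⟩
          (Or.inr (by simp; omega))
      · have : (k : ℕ) - (d + 1) = (k : ℕ) - d := by omega
        simpa [this] using ih
  have up : ∀ d : ℕ, ∀ h : (k : ℕ) + d < N, u ⟨(k : ℕ) + d, h⟩ = 0 := by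
    intro d
    induction d with
    | zero => intro h; simpa using hk
    | succ d ih =>
      intro h
      exact nbr ⟨(k : ℕ) + d, by omega⟩ (ih (by omega)) ⟨(k : ℕ) + (d + 1), h⟩
        (Or.inl (by simp; omega))
  intro i
  by_cases hik : (i : ℕ) ≤ (k : ℕ)
  · have hi : i = ⟨(k : ℕ) - ((k : ℕ) - (i : ℕ)), by omega⟩ := Fin.ext (by simp; omega)
    rw [hi]
    exact down ((k : ℕ) - (i : ℕ))
  · have hi : i = ⟨(k : ℕ) + ((i : ℕ) - (k : ℕ)), by omega⟩ := Fin.ext (by simp; omega)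
    rw [hi]
    exact up ((i : ℕ) - (k : ℕ)) (by omega)

end Aux

/-- For a real symmetric unreduced tridiagonal matrix with negative off-diagonal
entries and eigenvalues `0 = λ₁ < λ₂ < ... < λ_N` (N > 1), the entries of a unit
eigenvector associated to the eigenvalue 0 all have the same (strict) sign. -/
theorem stmt7 {N : ℕ} (hN : 1 < N) (S : Matrix (Fin N) (Fin N) ℝ)
    (hS : S.IsSymm) (htri : IsTridiagonal S)
    (hneg : ∀ i j : Fin N, (i : ℕ) + 1 = j → S i j < 0)
    (μ : Fin N → ℝ) (hμ : StrictMono μ) (hμ0 : μ ⟨0, by omega⟩ = 0)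
    (hchar : S.charpoly = ∏ i, (X - C (μ i)))
    (v : Fin N → ℝ) (hv : S.mulVec v = 0) (hunit : ∑ i, v i ^ 2 = 1) :
    (∀ i, 0 < v i) ∨ (∀ i, v i < 0) := by
  have hoff := aux_offdiag_nonpos S hS htri hneg
  have hherm : S.IsHermitian := by
    rw [Matrix.IsHermitian]
    ext i j
    simpa using hS.apply i j
  -- all μ are nonnegative
  have hμnn : ∀ i, 0 ≤ μ i := by
    intro i
    rw [← hμ0]
    exact hμ.monotone (by simp [Fin.le_def])
  -- characteristic polynomial has no negative roots
  have hnoneg : ∀ t : ℝ, t < 0 → S.charpoly.eval t ≠ 0 := by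
    intro t ht
    rw [hchar]
    simp only [eval_prod, eval_sub, eval_X, eval_C]
    rw [Finset.prod_ne_zero_iff]
    intro i _
    have : t - μ i < 0 := by linarith [hμnn i]
    exact ne_of_lt this
  -- eigenvalues are nonnegative
  have heig : ∀ i, 0 ≤ hherm.eigenvalues i := by
    intro i
    by_contra hlt
    push_neg at hlt
    have hmem := hherm.eigenvalues_mem_spectrum_real i
    rw [spectrum.mem_iff] at hmem
    apply hmem
    have hdet : (algebraMap ℝ (Matrix (Fin N) (Fin N) ℝ) (hherm.eigenvalues i) - S).det ≠ 0 := by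
      have hcp : S.charpoly.eval (hherm.eigenvalues i)
          = (algebraMap ℝ (Matrix (Fin N) (Fin N) ℝ) (hherm.eigenvalues i) - S).det := by
        rw [Matrix.charpoly, eval_det, Matrix.matPolyEquiv_charmatrix]
        rw [eval_sub, eval_X, eval_C]
        congr 1
      rw [← hcp]
      exact hnoneg _ hlt
    exact (Matrix.isUnit_iff_isUnit_det _).mpr (isUnit_iff_ne_zero.mpr hdet)
  have hpsd : S.PosSemidef := hherm.posSemidef_iff_eigenvalues_nonneg.mpr heig
  -- the absolute value vector
  set w : Fin N → ℝ := fun i => |v i| with hw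
  have hwpos : ∀ i, 0 ≤ w i := fun i => abs_nonneg _
  -- w^T S w ≤ v^T S v = 0
  have hle : w ⬝ᵥ S.mulVec w ≤ 0 := by
    have hveq : v ⬝ᵥ S.mulVec v = 0 := by rw [hv]; simp
    have hexp : ∀ x : Fin N → ℝ, x ⬝ᵥ S.mulVec x = ∑ i, ∑ j, x i * (S i j * x j) := by
      intro x
      simp [dotProduct, Matrix.mulVec, Finset.mul_sum]
    rw [hexp]
    rw [hexp] at hveq
    rw [← hveq]
    apply Finset.sum_le_sum
    intro i _
    apply Finset.sum_le_sum
    intro j _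
    by_cases hij : i = j
    · subst hij
      have : w i * (S i i * w i) = v i * (S i i * v i) := by
        simp only [hw]
        rcases abs_choice (v i) with h | h <;> rw [h] <;> ring
      rw [this]
    · have h1 : w i * (S i j * w j) = S i j * (w i * w j) := by ring
      have h2 : v i * (S i j * v j) = S i j * (v i * v j) := by ring
      rw [h1, h2]
      apply mul_le_mul_of_nonpos_left _ (hoff i j hij)
      calc v i * v j ≤ |v i * v j| := le_abs_self _
        _ = w i * w j := by rw [abs_mul]
  have hge : (0:ℝ) ≤ w ⬝ᵥ S.mulVec w := by
    have := hpsd.dotProduct_mulVec_nonneg w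
    simpa using this
  have hzero : w ⬝ᵥ S.mulVec w = 0 := le_antisymm hle hge
  have hw0 : S.mulVec w = 0 := by
    have := (hpsd.dotProduct_mulVec_zero_iff w).mp (by simpa using hzero)
    exact this
  -- no entry of v vanishes
  have hvne : ∀ i, v i ≠ 0 := by
    intro i hvi
    have hwi : w i = 0 := by simp [hw, hvi]
    have hall := aux_prop S hS htri hneg w hw0 hwpos i hwi
    have : ∀ j, v j = 0 := by
      intro j
      have := hall j
      simpa [hw, abs_eq_zero] using this
    rw [Finset.sum_congr rfl (fun j _ => by rw [this j])] at hunit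
    simp at hunit
  -- sign dichotomy
  by_cases hp : ∀ i, 0 < v i
  · exact Or.inl hp
  · right
    push_neg at hp
    obtain ⟨i₀, hi₀⟩ := hp
    have hi₀' : v i₀ < 0 := lt_of_le_of_ne hi₀ (hvne i₀)
    intro j
    rcases lt_trichotomy (v j) 0 with h | h | h
    · exact h
    · exact absurd h (hvne j)
    · exfalso
      -- w - v is a nonneg kernel vector vanishing at j
      set u : Fin N → ℝ := fun t => w t - v t with hu
      have hu0 : S.mulVec u = 0 := by
        have : u = w - v := by ext t; simp [hu]
        rw [this, Matrix.mulVec_sub, hw0, hv, sub_zero]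
      have hupos : ∀ t, 0 ≤ u t := by
        intro t; simp only [hu, hw]
        have := le_abs_self (v t); linarith
      have huj : u j = 0 := by
        simp only [hu, hw, abs_of_pos h, sub_self]
      have hall := aux_prop S hS htri hneg u hu0 hupos j huj
      have := hall i₀
      simp only [hu, hw, sub_eq_zero] at this
      have h2 : (0:ℝ) ≤ v i₀ := this ▸ abs_nonneg (v i₀)
      linarith
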